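/- The two terms of the KP-II resonance function never cancel: for nonzero integers ξ₁, ξ₂ with ξ₁+ξ₂ ≠ 0 and any integers η₁, η₂, the quantities 3ξ₁ξ₂(ξ₁+ξ₂) and (η₁ξ₂−η₂ξ₁)²/(ξ₁ξ₂(ξ₁+ξ₂)) have the same sign (or the second is zero), hence |Ω| ≥ 3|ξ₁ξ₂(ξ₁+ξ₂)|. -/

import Mathlib

/-- The two terms of the KP-II resonance function never cancel: the second term
has the same sign as the first (or vanishes), hence `|Ω| ≥ 3|ξ₁ξ₂(ξ₁+ξ₂)|`. -/
theorem resonance_no_cancellation (ξ₁ ξ₂ η₁ η₂ : ℤ) (h₁ : ξ₁ ≠ 0) (h₂ : ξ₂ ≠ 0)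
    (h₃ : ξ₁ + ξ₂ ≠ 0) :
    (0 ≤ (3 * (ξ₁ : ℝ) * ξ₂ * ((ξ₁ : ℝ) + ξ₂)) *
        (((η₁ : ℝ) * ξ₂ - η₂ * ξ₁) ^ 2 / ((ξ₁ : ℝ) * ξ₂ * ((ξ₁ : ℝ) + ξ₂)))) ∧
    |3 * (ξ₁ : ℝ) * ξ₂ * ((ξ₁ : ℝ) + ξ₂) +
        ((η₁ : ℝ) * ξ₂ - η₂ * ξ₁) ^ 2 / ((ξ₁ : ℝ) * ξ₂ * ((ξ₁ : ℝ) + ξ₂))| ≥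
      3 * |(ξ₁ : ℝ) * ξ₂ * ((ξ₁ : ℝ) + ξ₂)| := by
  set D : ℝ := (ξ₁ : ℝ) * ξ₂ * ((ξ₁ : ℝ) + ξ₂) with hD
  set N : ℝ := (η₁ : ℝ) * ξ₂ - η₂ * ξ₁ with hN
  have hD0 : D ≠ 0 := by
    have e1 : (ξ₁ : ℝ) ≠ 0 := Int.cast_ne_zero.mpr h₁
    have e2 : (ξ₂ : ℝ) ≠ 0 := Int.cast_ne_zero.mpr h₂
    have e3 : ((ξ₁ : ℝ) + ξ₂) ≠ 0 := by
      have : ((ξ₁ + ξ₂ : ℤ) : ℝ) ≠ 0 := Int.cast_ne_zero.mpr h₃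
      push_cast at this; exact this
    exact mul_ne_zero (mul_ne_zero e1 e2) e3
  have key : (3 * D) * (N ^ 2 / D) = 3 * N ^ 2 := by
    field_simp
  have hN2 : (0:ℝ) ≤ N ^ 2 := sq_nonneg N
  constructor
  · rw [show 3 * (ξ₁ : ℝ) * ξ₂ * ((ξ₁ : ℝ) + ξ₂) = 3 * D by rw [hD]; ring, key]
    positivity
  · have hrw : 3 * (ξ₁ : ℝ) * ξ₂ * ((ξ₁ : ℝ) + ξ₂) = 3 * D := by rw [hD]; ring
    rw [hrw]
    rcases lt_or_gt_of_ne hD0 with h | h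
    · have hterm : N ^ 2 / D ≤ 0 := div_nonpos_of_nonneg_of_nonpos hN2 h.le
      rw [abs_of_neg h, abs_of_nonpos (by nlinarith)]
      nlinarith
    · have hterm : 0 ≤ N ^ 2 / D := div_nonneg hN2 h.le
      rw [abs_of_pos h, abs_of_nonneg (by nlinarith)]
      nlinarith
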